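/- Let (V,E) be a finite simple graph. For any S ⊆ V, let P_S := { X ⊆ S | X is a clique and S \ X is a coclique }. Then |P_S| ≤ |S| + 1. -/

import Mathlib

/-- For any subset `S` of the vertices of a finite graph, the number of sets
`X ⊆ S` such that `X` is a clique and `S \ X` is a coclique is at most `|S| + 1`. -/
theorem card_clique_coclique_partitions_le {V : Type} [Fintype V]
    (G : SimpleGraph V) (S : Set V) :
    {X : Set V | X ⊆ S ∧ G.IsClique X ∧
        (S \ X).Pairwise fun u v => ¬ G.Adj u v}.ncard ≤ S.ncard + 1 := by
  classical
  set P : Set (Set V) := {X : Set V | X ⊆ S ∧ G.IsClique X ∧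
        (S \ X).Pairwise fun u v => ¬ G.Adj u v} with hPdef
  rcases P.eq_empty_or_nonempty with h | hne
  · simp [h]
  -- Any difference of two members is a subsingleton.
  have key : ∀ X ∈ P, ∀ Y ∈ P, (X \ Y).Subsingleton := by
    intro X hX Y hY a ha b hb
    by_contra hab
    have hadj : G.Adj a b := hX.2.1 ha.1 hb.1 hab
    exact hY.2.2 ⟨hX.1 ha.1, ha.2⟩ ⟨hX.1 hb.1, hb.2⟩ hab hadj
  -- A member of maximum cardinality.
  obtain ⟨M, hM, hmaxwrt⟩ :=
    Set.Finite.exists_maximalFor Set.ncard P (Set.toFinite P) hne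
  have hmax : ∀ X ∈ P, X.ncard ≤ M.ncard := by
    intro X hX
    by_contra h
    push_neg at h
    have := hmaxwrt hX h.le
    omega
  have hMS : M ⊆ S := hM.1
  -- no member properly contains M
  have hnosup : ∀ X ∈ P, ∀ x ∈ X, x ∉ M → M ⊆ X → False := by
    intro X hX x hx hxM hMX
    have hss : M ⊂ X := ⟨hMX, fun h => hxM (h hx)⟩
    have := Set.ncard_lt_ncard hss (Set.toFinite X)
    exact absurd (hmax X hX) (by omega)
  set A : Set (Set V) := {X ∈ P | X ≠ M ∧ X \ M = ∅} with hAdef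
  set B : Set (Set V) := {X ∈ P | (X \ M).Nonempty} with hBdef
  have hcover : P ⊆ insert M (A ∪ B) := by
    intro X hX
    rcases eq_or_ne X M with rfl | hXM
    · exact Set.mem_insert _ _
    rcases (X \ M).eq_empty_or_nonempty with he | hne'
    · exact Set.mem_insert_of_mem _ (Or.inl ⟨hX, hXM, he⟩)
    · exact Set.mem_insert_of_mem _ (Or.inr ⟨hX, hne'⟩)
  -- bound A
  have hA : A.ncard ≤ M.ncard := by
    have hsub : A ⊆ (fun m => M \ {m}) '' M := by
      intro X hX
      obtain ⟨hXP, hXM, hXd⟩ := hX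
      have hXsub : X ⊆ M := Set.diff_eq_empty.mp hXd
      have hne' : (M \ X).Nonempty := by
        rcases Set.eq_empty_or_nonempty (M \ X) with he | h
        · exact absurd (Set.Subset.antisymm hXsub (Set.diff_eq_empty.mp he)) hXM
        · exact h
      obtain ⟨m, hm⟩ := hne'
      have hMX : M \ X = {m} := ((key M hM X hXP).eq_singleton_of_mem hm)
      refine ⟨m, hm.1, ?_⟩
      ext a
      constructor
      · rintro ⟨haM, ham⟩
        by_contra haX
        have : a ∈ M \ X := ⟨haM, haX⟩
        rw [hMX] at this
        exact ham this
      · intro ha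
        refine ⟨hXsub ha, fun h => ?_⟩
        have : m ∈ M \ X := by rw [hMX]; rfl
        rw [← h] at this
        exact this.2 ha
    calc A.ncard ≤ ((fun m => M \ {m}) '' M).ncard :=
          Set.ncard_le_ncard hsub (Set.toFinite _)
      _ ≤ M.ncard := Set.ncard_image_le (Set.toFinite M)
  -- bound B
  have hB : B.ncard ≤ (S \ M).ncard := by
    rcases Set.eq_empty_or_nonempty B with he | ⟨X₀, hX₀⟩
    · simp [he]
    have : Nonempty V := ⟨hX₀.2.some⟩
    set f : Set V → V := fun X =>
      if h : (X \ M).Nonempty then h.some else Classical.arbitrary V with hfdef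
    have hfmem : ∀ X ∈ B, f X ∈ X \ M := by
      intro X hX
      simp only [hfdef, dif_pos hX.2]
      exact hX.2.some_mem
    have hdiff : ∀ X ∈ B, X \ M = {f X} :=
      fun X hX => (key X hX.1 M hM).eq_singleton_of_mem (hfmem X hX)
    apply Set.ncard_le_ncard_of_injOn f
    · intro X hX
      exact ⟨hX.1.1 (hfmem X hX).1, (hfmem X hX).2⟩
    · -- injectivity
      intro X hX Y hY hfXY
      by_contra hXY
      set x := f X with hxdef
      have hxX : x ∈ X \ M := hfmem X hX
      have hxY : x ∈ Y \ M := hfXY ▸ hfmem Y hY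
      -- M \ X and M \ Y are nonempty singletons
      have hMXne : (M \ X).Nonempty := by
        rcases Set.eq_empty_or_nonempty (M \ X) with he' | h
        · exact absurd (hnosup X hX.1 x hxX.1 hxX.2 (Set.diff_eq_empty.mp he')) not_false
        · exact h
      have hMYne : (M \ Y).Nonempty := by
        rcases Set.eq_empty_or_nonempty (M \ Y) with he' | h
        · exact absurd (hnosup Y hY.1 x hxY.1 hxY.2 (Set.diff_eq_empty.mp he')) not_false
        · exact h
      obtain ⟨m, hm⟩ := hMXne
      obtain ⟨m', hm'⟩ := hMYne
      have hMX : M \ X = {m} := (key M hM X hX.1).eq_singleton_of_mem hm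
      have hMY : M \ Y = {m'} := (key M hM Y hY.1).eq_singleton_of_mem hm'
      -- characterizations
      have hXeq : X = (M \ {m}) ∪ {x} := by
        ext a
        constructor
        · intro ha
          by_cases haM : a ∈ M
          · refine Or.inl ⟨haM, fun h => ?_⟩
            have : m ∈ M \ X := by rw [hMX]; rfl
            rw [← h] at this; exact this.2 ha
          · have : a ∈ X \ M := ⟨ha, haM⟩
            rw [hdiff X hX] at this
            exact Or.inr this
        · rintro (⟨haM, ham⟩ | ha)
          · by_contra haX
            have : a ∈ M \ X := ⟨haM, haX⟩
            rw [hMX] at this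
            exact ham this
          · rw [Set.mem_singleton_iff] at ha
            rw [ha]; exact hxX.1
      have hYeq : Y = (M \ {m'}) ∪ {x} := by
        ext a
        constructor
        · intro ha
          by_cases haM : a ∈ M
          · refine Or.inl ⟨haM, fun h => ?_⟩
            have : m' ∈ M \ Y := by rw [hMY]; rfl
            rw [← h] at this; exact this.2 ha
          · have : a ∈ Y \ M := ⟨ha, haM⟩
            rw [hdiff Y hY, ← hfXY] at this
            exact Or.inr this
        · rintro (⟨haM, ham⟩ | ha)
          · by_contra haY
            have : a ∈ M \ Y := ⟨haM, haY⟩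
            rw [hMY] at this
            exact ham this
          · rw [Set.mem_singleton_iff] at ha
            rw [ha]; exact hxY.1
      have hmm' : m ≠ m' := by
        intro h
        apply hXY
        rw [hXeq, hYeq, h]
      -- x is adjacent to every vertex of M
      have hadjx : ∀ b ∈ M, G.Adj x b := by
        intro b hb
        by_cases hbm : b = m
        · -- use Y : b = m ≠ m', so b ∈ Y
          have hbY : b ∈ Y := by
            rw [hYeq]
            exact Or.inl ⟨hb, by rw [hbm]; exact hmm'⟩
          exact hY.1.2.1 hxY.1 hbY (fun h => hxY.2 (h ▸ hb))
        · have hbX : b ∈ X := by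
            rw [hXeq]
            exact Or.inl ⟨hb, hbm⟩
          exact hX.1.2.1 hxX.1 hbX (fun h => hxX.2 (h ▸ hb))
      -- then M ∪ {x} is in P, contradicting maximality
      have hnew : insert x M ∈ P := by
        refine ⟨?_, ?_, ?_⟩
        · intro a ha
          rcases ha with rfl | ha
          · exact hX.1.1 hxX.1
          · exact hMS ha
        · intro a ha b hb hab
          rcases ha with rfl | ha
          · rcases hb with rfl | hb
            · exact absurd rfl hab
            · exact hadjx b hb
          · rcases hb with rfl | hb
            · exact (hadjx a ha).symm
            · exact hM.2.1 ha hb hab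
        · refine Set.Pairwise.mono ?_ hM.2.2
          intro a ha
          exact ⟨ha.1, fun h => ha.2 (Set.mem_insert_of_mem _ h)⟩
      have hcard : (insert x M).ncard = M.ncard + 1 :=
        Set.ncard_insert_of_notMem hxX.2 (Set.toFinite M)
      have := hmax _ hnew
      omega
  -- put it together
  have h1 : P.ncard ≤ (insert M (A ∪ B)).ncard :=
    Set.ncard_le_ncard hcover (Set.toFinite _)
  have h2 : (insert M (A ∪ B)).ncard ≤ (A ∪ B).ncard + 1 :=
    Set.ncard_insert_le _ _
  have h3 : (A ∪ B).ncard ≤ A.ncard + B.ncard := Set.ncard_union_le _ _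
  have h4 : (S \ M).ncard + M.ncard = S.ncard :=
    Set.ncard_diff_add_ncard_of_subset hMS (Set.toFinite S)
  omega
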